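/- Let P be a poset with least element 0 and Z ⊆ P. Then the diagonal Δ_Z = {(z,z) : z ∈ Z} is a (P×P)-modular subset of the product poset P×P (ordered componentwise, with least element (0,0)) if and only if Z is a P-modular subset of P. -/
import Mathlib


/-- `W` is `Q`-modular: whenever `y, z ∈ W` with `y ∧ z = 0` (i.e. `⊥` is the only
common lower bound), `p ≤ y`, `q ≤ z` and `p ∨ q` exists in `Q`, then `q` is the
greatest lower bound in `Q` of `z` and `p ∨ q`. -/
def QModular {β : Type*} [PartialOrder β] [OrderBot β] (W : Set β) : Prop :=
  ∀ y ∈ W, ∀ z ∈ W, Disjoint y z →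
    ∀ p q s, p ≤ y → q ≤ z → IsLUB {p, q} s → IsGLB {z, s} q

/-- The diagonal `Δ_Z = {(z, z) : z ∈ Z}` is a `(P × P)`-modular subset of the product
poset `P × P` if and only if `Z` is a `P`-modular subset of `P`. -/
theorem stmt10 {α : Type*} [PartialOrder α] [OrderBot α] (Z : Set α) :
    QModular ((fun z => (z, z)) '' Z : Set (α × α)) ↔ QModular Z := by
  constructor
  · intro H y hy z hz hd p q s hpy hqz hlub
    have hd' : Disjoint ((y, y) : α × α) (z, z) := by
      intro x hx1 hx2
      exact ⟨hd hx1.1 hx2.1, hd hx1.2 hx2.2⟩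
    have hlub' : IsLUB ({(p, p), (q, q)} : Set (α × α)) (s, s) := by
      constructor
      · rintro x (rfl | rfl)
        · exact ⟨hlub.1 (by simp), hlub.1 (by simp)⟩
        · exact ⟨hlub.1 (by simp), hlub.1 (by simp)⟩
      · intro x hx
        have h1 := hx (Set.mem_insert _ _)
        have h2 := hx (Set.mem_insert_of_mem _ rfl)
        have hub1 : x.1 ∈ upperBounds {p, q} := by
          rintro a (rfl | rfl); exacts [h1.1, h2.1]
        have hub2 : x.2 ∈ upperBounds {p, q} := by
          rintro a (rfl | rfl); exacts [h1.2, h2.2]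
        exact ⟨hlub.2 hub1, hlub.2 hub2⟩
    have hglb := H (y, y) ⟨y, hy, rfl⟩ (z, z) ⟨z, hz, rfl⟩ hd'
      (p, p) (q, q) (s, s) ⟨hpy, hpy⟩ ⟨hqz, hqz⟩ hlub'
    constructor
    · rintro a (rfl | rfl)
      · exact (hglb.1 (Set.mem_insert _ _)).1
      · exact (hglb.1 (Set.mem_insert_of_mem _ rfl)).1
    · intro a ha
      have h1 := ha (Set.mem_insert _ _)
      have h2 := ha (Set.mem_insert_of_mem _ rfl)
      have : (a, a) ∈ lowerBounds ({(z, z), (s, s)} : Set (α × α)) := by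
        rintro x (rfl | rfl)
        · exact ⟨h1, h1⟩
        · exact ⟨h2, h2⟩
      exact (hglb.2 this).1
  · intro H
    rintro _ ⟨y, hy, rfl⟩ _ ⟨z, hz, rfl⟩ hd p q s hpy hqz hlub
    have hd1 : Disjoint y z := by
      intro x hx1 hx2
      exact (hd (x := (x, x)) ⟨hx1, hx1⟩ ⟨hx2, hx2⟩).1
    have hp1 := hlub.1 (Set.mem_insert _ _)
    have hq1 := hlub.1 (Set.mem_insert_of_mem _ rfl)
    have hlub1 : IsLUB {p.1, q.1} s.1 := by
      constructor
      · rintro a (rfl | rfl); exacts [hp1.1, hq1.1]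
      · intro a ha
        have : (a, s.2) ∈ upperBounds ({p, q} : Set (α × α)) := by
          rintro x (rfl | rfl)
          · exact ⟨ha (Set.mem_insert _ _), hp1.2⟩
          · exact ⟨ha (Set.mem_insert_of_mem _ rfl), hq1.2⟩
        exact (hlub.2 this).1
    have hlub2 : IsLUB {p.2, q.2} s.2 := by
      constructor
      · rintro a (rfl | rfl); exacts [hp1.2, hq1.2]
      · intro a ha
        have : (s.1, a) ∈ upperBounds ({p, q} : Set (α × α)) := by
          rintro x (rfl | rfl)
          · exact ⟨hp1.1, ha (Set.mem_insert _ _)⟩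
          · exact ⟨hq1.1, ha (Set.mem_insert_of_mem _ rfl)⟩
        exact (hlub.2 this).2
    have g1 := H y hy z hz hd1 p.1 q.1 s.1 hpy.1 hqz.1 hlub1
    have g2 := H y hy z hz hd1 p.2 q.2 s.2 hpy.2 hqz.2 hlub2
    constructor
    · rintro x (rfl | rfl)
      · exact hqz
      · exact ⟨g1.1 (Set.mem_insert_of_mem _ rfl), g2.1 (Set.mem_insert_of_mem _ rfl)⟩
    · intro a ha
      have h1 := ha (Set.mem_insert _ _)
      have h2 := ha (Set.mem_insert_of_mem _ rfl)
      have l1 : a.1 ∈ lowerBounds {z, s.1} := by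
        rintro x (rfl | rfl); exacts [h1.1, h2.1]
      have l2 : a.2 ∈ lowerBounds {z, s.2} := by
        rintro x (rfl | rfl); exacts [h1.2, h2.2]
      exact ⟨g1.2 l1, g2.2 l2⟩
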